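/- arXiv:math-ph/0404015 — 3 statements merged into one kernel-verified Lean document; each statement's English description precedes it below -/
import Mathlib

section
/- Let f be analytic near E₀ with f'(E₀) = ⋯ = f^{(k−1)}(E₀) = 0, f^{(k)}(E₀) = a ≠ 0, k ≥ 2, and f(E₀) ∈ ℝ. Then for each j ∈ {1, …, 2k}, there are points E arbitrarily close to E₀ with E ≠ E₀, f(E) ∈ ℝ, and arg(E − E₀) arbitrarily close to (jπ − arg a)/k. In particular, the level set {E : f(E) ∈ ℝ} near E₀ contains points in at least 2k distinct directions from E₀. -/
open Real

private lemma aux_im_exp_mul (x : ℝ) (w : ℂ) :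
    (Complex.exp (x * Complex.I) * w).im = Real.cos x * w.im + Real.sin x * w.re := by
  rw [Complex.mul_im, Complex.exp_ofReal_mul_I_re, Complex.exp_ofReal_mul_I_im]

set_option maxHeartbeats 1000000 in
/-- Existence part of the 2k-arc structure: for each of the 2k directions
(jπ − arg a)/k there are points E arbitrarily close to E₀ with f(E) real and
arg(E − E₀) arbitrarily close (mod 2π) to that direction. -/
theorem stmt_12 (f : ℂ → ℂ) (E₀ : ℂ) (k : ℕ) (hk : 2 ≤ k) (a : ℂ) (ha : a ≠ 0)
    (hf : AnalyticAt ℂ f E₀) (hreal : (f E₀).im = 0)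
    (hder : ∀ j : ℕ, 1 ≤ j → j ≤ k - 1 → iteratedDeriv j f E₀ = 0)
    (hka : iteratedDeriv k f E₀ = a) :
    ∀ j ∈ Finset.Icc 1 (2 * k), ∀ ε > (0 : ℝ), ∀ δ > (0 : ℝ),
      ∃ E : ℂ, E ≠ E₀ ∧ ‖E - E₀‖ < ε ∧ (f E).im = 0 ∧
        ∃ m : ℤ,
          |Complex.arg (E - E₀) - ((j : ℝ) * π - Complex.arg a) / k - 2 * π * m| < δ := by
  intro j _hj ε hε δ hδ
  have hk0 : 0 < k := by omega
  have hkR : (0 : ℝ) < k := by exact_mod_cast hk0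
  -- the function g := f - f E₀ and its power series
  set g : ℂ → ℂ := fun z => f z - f E₀ with hgdef
  have hganal : AnalyticAt ℂ g E₀ := hf.sub analyticAt_const
  obtain ⟨q, hq⟩ := hganal
  -- derivatives of g agree with those of f in positive degree
  have hgf : ∀ n : ℕ, 0 < n → iteratedDeriv n g = iteratedDeriv n f := by
    intro n hn
    obtain ⟨m, rfl⟩ : ∃ m, n = m + 1 := ⟨n - 1, by omega⟩
    have hd : deriv g = deriv f := by
      funext z
      show deriv (fun w => f w - f E₀) z = deriv f z
      exact deriv_sub_const _
    rw [iteratedDeriv_succ', iteratedDeriv_succ', hd]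
  -- coefficients of q
  have hcoeff : ∀ n : ℕ, ((Nat.factorial n) : ℂ) * q.coeff n = iteratedDeriv n g E₀ := by
    intro n
    obtain ⟨R, hR⟩ := hq
    have h1 : (Nat.factorial n) • q n (fun _ => (1 : ℂ))
        = iteratedFDeriv ℂ n g E₀ (fun _ => (1 : ℂ)) := hR.factorial_smul 1 n
    rw [iteratedDeriv_eq_iteratedFDeriv, ← h1]
    simp only [FormalMultilinearSeries.coeff, nsmul_eq_mul]
    norm_cast
  have hq0 : q.coeff 0 = 0 := by
    have h1 : q.coeff 0 = g E₀ := hq.coeff_zero 1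
    rw [h1]
    show f E₀ - f E₀ = 0
    ring
  have hqk : q.coeff k = a / (Nat.factorial k) := by
    have h1 := hcoeff k
    rw [hgf k hk0, hka] at h1
    field_simp [Nat.factorial_ne_zero] at h1 ⊢
    rw [mul_comm] at h1
    linear_combination h1
  have hqkne : q.coeff k ≠ 0 := by
    rw [hqk]
    exact div_ne_zero ha (by exact_mod_cast Nat.factorial_ne_zero k)
  have hqn : ∀ n : ℕ, n < k → q n = 0 := by
    intro n hn
    rw [← FormalMultilinearSeries.coeff_eq_zero]
    rcases Nat.eq_zero_or_pos n with rfl | hn0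
    · exact hq0
    · have h1 := hcoeff n
      rw [hgf n hn0, hder n hn0 (by omega)] at h1
      have h2 : ((Nat.factorial n) : ℂ) ≠ 0 := by exact_mod_cast Nat.factorial_ne_zero n
      exact (mul_eq_zero.mp h1).resolve_left h2
  have hqne : q ≠ 0 := by
    intro h0
    apply hqkne
    rw [FormalMultilinearSeries.coeff_eq_zero, h0]
    rfl
  -- the order of q is k
  have horder : q.order = k := by
    rcases lt_trichotomy q.order k with h | h | h
    · exact absurd (hqn _ h) (q.apply_order_ne_zero hqne)
    · exact h
    · exact absurd (q.apply_eq_zero_of_lt_order h)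
        (fun h0 => hqkne (FormalMultilinearSeries.coeff_eq_zero.mpr h0))
  -- factorization  g z = (z - E₀)^k • h z
  set h : ℂ → ℂ := (Function.swap dslope E₀)^[k] g with hhdef
  have hh : HasFPowerSeriesAt h (FormalMultilinearSeries.fslope^[k] q) E₀ :=
    hq.has_fpower_series_iterate_dslope_fslope k
  have hfac : ∀ᶠ z in nhds E₀, g z = (z - E₀) ^ k • h z := by
    have h1 := hq.eq_pow_order_mul_iterate_dslope
    rw [horder] at h1
    exact Filter.Eventually.of_forall h1
  have hbval : h E₀ = a / (Nat.factorial k) := by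
    have h1 : (FormalMultilinearSeries.fslope^[k] q).coeff 0 = h E₀ := hh.coeff_zero 1
    have h2 : (FormalMultilinearSeries.fslope^[k] q).coeff 0 = q.coeff k := by
      rw [FormalMultilinearSeries.coeff_iterate_fslope, zero_add]
    rw [← hqk, ← h2, h1]
  -- numerical parameters
  set L : ℝ := ‖a‖ / (Nat.factorial k) with hLdef
  have hL : 0 < L := div_pos (norm_pos_iff.mpr ha) (by positivity)
  set δ' : ℝ := min δ (π / (2 * k)) / 2 with hδ'def
  have hδ'0 : 0 < δ' := by
    have hπ' := Real.pi_pos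
    have h1 : 0 < min δ (π / (2 * k)) := lt_min hδ (by positivity)
    rw [hδ'def]
    linarith
  have hδ'δ : δ' < δ := by
    have h1 : min δ (π / (2 * k)) ≤ δ := min_le_left _ _
    simp only [hδ'def]
    linarith
  have hkδ' : (k : ℝ) * δ' ≤ π / 4 := by
    have h1 : min δ (π / (2 * k)) ≤ π / (2 * k) := min_le_right _ _
    have h2 : δ' ≤ π / (2 * k) / 2 := by simp only [hδ'def]; linarith
    have h3 : (k : ℝ) * δ' ≤ (k : ℝ) * (π / (2 * k) / 2) := by
      apply mul_le_mul_of_nonneg_left h2 (le_of_lt hkR)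
    calc (k : ℝ) * δ' ≤ (k : ℝ) * (π / (2 * k) / 2) := h3
      _ = π / 4 := by field_simp; ring
  set S : ℝ := Real.sin ((k : ℝ) * δ') with hSdef
  have hπ : (0 : ℝ) < π := Real.pi_pos
  have hkδ'0 : 0 < (k : ℝ) * δ' := mul_pos hkR hδ'0
  have hS : 0 < S := Real.sin_pos_of_pos_of_lt_pi hkδ'0 (by linarith)
  have hcosnn : 0 ≤ Real.cos ((k : ℝ) * δ') :=
    Real.cos_nonneg_of_mem_Icc ⟨by linarith, by linarith⟩
  have hcos1 : Real.cos ((k : ℝ) * δ') ≤ 1 := Real.cos_le_one _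
  set s : ℝ := min (L / 2) (S * L / 4) with hsdef
  have hs0 : 0 < s := lt_min (by linarith) (by nlinarith)
  have hsL : s ≤ L / 2 := min_le_left _ _
  have hsS : s ≤ S * L / 4 := min_le_right _ _
  -- eventual properties in a ball of radius ρ
  have hcontev : ∀ᶠ z in nhds E₀, ContinuousAt h z :=
    hh.analyticAt.eventually_analyticAt.mono fun z hz => hz.continuousAt
  have hsmall : ∀ᶠ z in nhds E₀, dist (h z) (h E₀) < s :=
    Metric.tendsto_nhds.mp hh.analyticAt.continuousAt.tendsto s hs0
  obtain ⟨ρ, hρ0, hball⟩ := Metric.eventually_nhds_iff.mp ((hfac.and hcontev).and hsmall)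
  set r : ℝ := min (ε / 2) (ρ / 2) with hrdef
  have hr0 : 0 < r := lt_min (by linarith) (by linarith)
  have hrε : r < ε := lt_of_le_of_lt (min_le_left _ _) (by linarith)
  have hrρ : r < ρ := lt_of_le_of_lt (min_le_right _ _) (by linarith)
  -- the circle of radius r
  set Epts : ℝ → ℂ := fun θ => E₀ + (r : ℂ) * (Complex.cos θ + Complex.sin θ * Complex.I)
    with hEdef
  have hEsub : ∀ θ : ℝ, Epts θ - E₀ = (r : ℂ) * Complex.exp ((θ : ℂ) * Complex.I) := by
    intro θ
    simp [hEdef, Complex.exp_mul_I]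
  have habs : ∀ θ : ℝ, ‖Epts θ - E₀‖ = r := by
    intro θ
    rw [hEsub, norm_mul, Complex.norm_exp_ofReal_mul_I, Complex.norm_real,
      Real.norm_eq_abs, abs_of_pos hr0, mul_one]
  have hdist : ∀ θ : ℝ, dist (Epts θ) E₀ < ρ := by
    intro θ
    rw [Complex.dist_eq, habs]
    exact hrρ
  have hpow : ∀ θ : ℝ, (Epts θ - E₀) ^ k
      = ((r ^ k : ℝ) : ℂ) * Complex.exp (((k : ℝ) * θ : ℝ) * Complex.I) := by
    intro θ
    rw [hEsub, mul_pow, ← Complex.exp_nat_mul]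
    push_cast
    ring_nf
  set θj : ℝ := ((j : ℝ) * π - Complex.arg a) / k with hθjdef
  have hkθj : (k : ℝ) * θj = (j : ℝ) * π - Complex.arg a := by
    rw [hθjdef]; field_simp
  -- the key rewriting of the imaginary part
  have key : ∀ θ : ℝ, ((-1 : ℝ)) ^ j * ((Epts θ - E₀) ^ k * h (Epts θ)).im
      = r ^ k * (Complex.exp (((k : ℝ) * (θ - θj) : ℝ) * Complex.I) *
          (Complex.exp ((-(Complex.arg a) : ℝ) * Complex.I) * h (Epts θ))).im := by
    intro θ
    rw [hpow]
    have e1 : (((k : ℝ) * θ : ℝ) : ℂ) * Complex.I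
        = ((j : ℕ) : ℂ) * ((π : ℂ) * Complex.I)
          + ((((k : ℝ) * (θ - θj) : ℝ) : ℂ) * Complex.I
            + ((-(Complex.arg a) : ℝ) : ℂ) * Complex.I) := by
      have e0 : (k : ℝ) * θ = (j : ℝ) * π + ((k : ℝ) * (θ - θj) + (-(Complex.arg a))) := by
        have : (k : ℝ) * (θ - θj) = (k : ℝ) * θ - ((j : ℝ) * π - Complex.arg a) := by
          rw [mul_sub, hkθj]
        linarith [this]
      push_cast
      rw [show ((k : ℂ) * θ) = (((k : ℝ) * θ : ℝ) : ℂ) by push_cast; ring]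
      rw [show (((k : ℝ) * θ : ℝ) : ℂ) = ((((j : ℝ) * π + ((k : ℝ) * (θ - θj)
        + (-(Complex.arg a)))) : ℝ) : ℂ) by rw [← e0]]
      push_cast
      ring
    rw [e1, Complex.exp_add, Complex.exp_add, Complex.exp_nat_mul, Complex.exp_pi_mul_I]
    have e2 : (((r ^ k : ℝ)) : ℂ) * ((-1 : ℂ) ^ j *
          (Complex.exp ((((k : ℝ) * (θ - θj) : ℝ)) * Complex.I) *
            Complex.exp (((-(Complex.arg a) : ℝ)) * Complex.I))) * h (Epts θ)
        = ((((-1 : ℝ) ^ j : ℝ)) : ℂ) * (((r ^ k : ℝ) : ℂ) *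
            (Complex.exp ((((k : ℝ) * (θ - θj) : ℝ)) * Complex.I) *
              (Complex.exp (((-(Complex.arg a) : ℝ)) * Complex.I) * h (Epts θ)))) := by
      push_cast
      ring
    rw [e2, Complex.im_ofReal_mul, Complex.im_ofReal_mul]
    rw [← mul_assoc, ← mul_pow]
    norm_num
  -- bounds on w := exp(-arg a · I) * h(Epts θ)
  have hbound : ∀ θ : ℝ,
      |(Complex.exp ((-(Complex.arg a) : ℝ) * Complex.I) * h (Epts θ)).im| < s ∧
      L - s < (Complex.exp ((-(Complex.arg a) : ℝ) * Complex.I) * h (Epts θ)).re := by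
    intro θ
    set u : ℂ := Complex.exp ((-(Complex.arg a) : ℝ) * Complex.I) with hudef
    have hu1 : ‖u‖ = 1 := Complex.norm_exp_ofReal_mul_I _
    have e6 : u * a = ((‖a‖ : ℝ) : ℂ) := by
      nth_rewrite 1 [← Complex.norm_mul_exp_arg_mul_I a]
      rw [hudef, show Complex.exp (((-(Complex.arg a) : ℝ)) * Complex.I) *
          (((‖a‖ : ℝ) : ℂ) * Complex.exp (((Complex.arg a : ℝ)) * Complex.I))
        = ((‖a‖ : ℝ) : ℂ) * Complex.exp ((((-(Complex.arg a)) : ℝ) : ℂ) * Complex.I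
            + ((Complex.arg a : ℝ) : ℂ) * Complex.I) from by rw [Complex.exp_add]; ring]
      rw [show ((((-(Complex.arg a)) : ℝ)) : ℂ) * Complex.I
          + ((Complex.arg a : ℝ) : ℂ) * Complex.I = 0 from by push_cast; ring]
      rw [Complex.exp_zero, mul_one]
    have huL : u * h E₀ = (L : ℂ) := by
      rw [hbval, hLdef, ← mul_div_assoc, e6]
      push_cast
      ring
    set w : ℂ := u * h (Epts θ) with hwdef
    have hdiff : ‖w - (L : ℂ)‖ < s := by
      rw [← huL, hwdef, show u * h (Epts θ) - u * h E₀ = u * (h (Epts θ) - h E₀) by ring,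
        norm_mul, hu1, one_mul]
      have := ((hball (hdist θ)).2)
      rwa [Complex.dist_eq] at this
    constructor
    · have h1 : |(w - (L : ℂ)).im| ≤ ‖w - (L : ℂ)‖ := Complex.abs_im_le_norm _
      have h2 : (w - (L : ℂ)).im = w.im := by simp
      rw [h2] at h1
      exact lt_of_le_of_lt h1 hdiff
    · have h1 : |(w - (L : ℂ)).re| ≤ ‖w - (L : ℂ)‖ := Complex.abs_re_le_norm _
      have h2 : (w - (L : ℂ)).re = w.re - L := by simp
      rw [h2] at h1
      have := (abs_le.mp h1).1
      linarith [hdiff, abs_nonneg ((w - (L : ℂ)).re)]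
  -- the continuous function for the IVT
  set G : ℝ → ℝ := fun θ => ((-1 : ℝ)) ^ j * ((Epts θ - E₀) ^ k * h (Epts θ)).im with hGdef
  have hEcont : Continuous Epts := by
    apply continuous_const.add
    apply continuous_const.mul
    exact (Complex.continuous_cos.comp Complex.continuous_ofReal).add
      ((Complex.continuous_sin.comp Complex.continuous_ofReal).mul continuous_const)
  have hGcont : ContinuousOn G (Set.Icc (θj - δ') (θj + δ')) := by
    intro θ _
    apply ContinuousAt.continuousWithinAt
    have h1 : ContinuousAt h (Epts θ) := (hball (hdist θ)).1.2
    have h2 : ContinuousAt (fun θ : ℝ => (Epts θ - E₀) ^ k * h (Epts θ)) θ :=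
      (((hEcont.sub continuous_const).pow k).continuousAt).mul (h1.comp hEcont.continuousAt)
    exact continuousAt_const.mul (Complex.continuous_im.continuousAt.comp h2)
  -- endpoint values
  have hGhi : 0 < G (θj + δ') := by
    have hk1 : (k : ℝ) * ((θj + δ') - θj) = (k : ℝ) * δ' := by ring_nf
    rw [hGdef]
    simp only
    rw [key (θj + δ'), hk1, aux_im_exp_mul]
    obtain ⟨him, hre⟩ := hbound (θj + δ')
    set wim := (Complex.exp ((-(Complex.arg a) : ℝ) * Complex.I) * h (Epts (θj + δ'))).im
    set wre := (Complex.exp ((-(Complex.arg a) : ℝ) * Complex.I) * h (Epts (θj + δ'))).re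
    have him' : -s < wim ∧ wim < s := abs_lt.mp him
    have h3 : -s ≤ Real.cos ((k : ℝ) * δ') * wim := by nlinarith [him'.1, him'.2]
    have h4 : S * (L - s) ≤ S * wre := by nlinarith
    have h5 : 0 < Real.cos ((k : ℝ) * δ') * wim + S * wre := by nlinarith
    have h6 : 0 < r ^ k := pow_pos hr0 k
    rw [← hSdef]
    exact mul_pos h6 h5
  have hGlo : G (θj - δ') < 0 := by
    have hk1 : (k : ℝ) * ((θj - δ') - θj) = -((k : ℝ) * δ') := by ring_nf
    rw [hGdef]
    simp only
    rw [key (θj - δ'), hk1, aux_im_exp_mul, Real.cos_neg, Real.sin_neg]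
    obtain ⟨him, hre⟩ := hbound (θj - δ')
    set wim := (Complex.exp ((-(Complex.arg a) : ℝ) * Complex.I) * h (Epts (θj - δ'))).im
    set wre := (Complex.exp ((-(Complex.arg a) : ℝ) * Complex.I) * h (Epts (θj - δ'))).re
    have him' : -s < wim ∧ wim < s := abs_lt.mp him
    have h3 : Real.cos ((k : ℝ) * δ') * wim ≤ s := by nlinarith [him'.1, him'.2]
    have h4 : S * (L - s) ≤ S * wre := by nlinarith
    have h5 : Real.cos ((k : ℝ) * δ') * wim + -S * wre < 0 := by nlinarith
    have h6 : 0 < r ^ k := pow_pos hr0 k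
    rw [← hSdef]
    exact mul_neg_of_pos_of_neg h6 h5
  -- intermediate value theorem
  have hmem : (0 : ℝ) ∈ Set.Icc (G (θj - δ')) (G (θj + δ')) :=
    ⟨le_of_lt hGlo, le_of_lt hGhi⟩
  obtain ⟨θ, hθmem, hθ0⟩ :=
    intermediate_value_Icc (by linarith : θj - δ' ≤ θj + δ') hGcont hmem
  -- conclude
  refine ⟨Epts θ, ?_, ?_, ?_, ?_⟩
  · intro hEeq
    have h1 := habs θ
    rw [hEeq, sub_self, norm_zero] at h1
    exact absurd h1.symm (ne_of_gt hr0)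
  · rw [habs]; exact hrε
  · have h1 := (hball (hdist θ)).1.1
    have h2 : f (Epts θ) = f E₀ + (Epts θ - E₀) ^ k * h (Epts θ) := by
      have : g (Epts θ) = f (Epts θ) - f E₀ := rfl
      rw [this, smul_eq_mul] at h1
      linear_combination h1
    have h3 : ((Epts θ - E₀) ^ k * h (Epts θ)).im = 0 := by
      have hne : ((-1 : ℝ)) ^ j ≠ 0 := by
        apply pow_ne_zero; norm_num
      have := hθ0
      rw [hGdef] at this
      simp only at this
      exact (mul_eq_zero.mp this).resolve_left hne
    rw [h2, Complex.add_im, hreal, h3, add_zero]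
  · refine ⟨⌊(π - θ) / (2 * π)⌋, ?_⟩
    have h1 : Epts θ - E₀ = (r : ℂ) * (Complex.cos θ + Complex.sin θ * Complex.I) := by
      simp [hEdef]
    rw [h1]
    have h2 := Complex.arg_mul_cos_add_sin_mul_I_sub hr0 θ
    have h3 : Complex.arg ((r : ℂ) * (Complex.cos θ + Complex.sin θ * Complex.I))
        - ((j : ℝ) * π - Complex.arg a) / (k : ℝ) - 2 * π * (⌊(π - θ) / (2 * π)⌋ : ℤ)
        = θ - θj := by
      rw [hθjdef]
      linarith [h2]
    rw [h3]
    have h4 : |θ - θj| ≤ δ' := by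
      rw [abs_le]
      exact ⟨by linarith [hθmem.1], by linarith [hθmem.2]⟩
    linarith [h4]
end

section
/- Let f : ℂ → ℂ be entire with f(conj z) = conj(f z), and suppose f restricted to ℝ has a strict local maximum or strict local minimum at E₀ ∈ ℝ with −1 < f(E₀) < 1, and suppose f is nonconstant of order less than 1. Then there exist nonreal E ∈ ℂ with f(E) real and −1 < f(E) < 1. -/
open Complex Filter

/-- Auxiliary lemma: the strict local maximum case. -/
lemma stmt_13_aux (f : ℂ → ℂ) (hf : Differentiable ℂ f)
    (hsym : ∀ z : ℂ, f (starRingEnd ℂ z) = starRingEnd ℂ (f z))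
    (E₀ : ℝ) (ε : ℝ) (hε : 0 < ε)
    (hstrict : ∀ x : ℝ, x ≠ E₀ → |x - E₀| < ε → (f (x : ℂ)).re < (f (E₀ : ℂ)).re)
    (hlo : -1 < (f (E₀ : ℂ)).re) (hhi : (f (E₀ : ℂ)).re < 1) :
    ∃ E : ℂ, E.im ≠ 0 ∧ (f E).im = 0 ∧ -1 < (f E).re ∧ (f E).re < 1 := by
  -- f(E₀) is real
  have hE₀conj : (starRingEnd ℂ) ((E₀ : ℂ)) = (E₀ : ℂ) := Complex.conj_ofReal E₀
  have hcre : (f (E₀ : ℂ)).im = 0 := by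
    have := hsym (E₀ : ℂ)
    rw [hE₀conj] at this
    have h2 := congrArg Complex.im this
    simp [Complex.conj_im] at h2
    linarith
  have hA : AnalyticAt ℂ f (E₀ : ℂ) := hf.analyticAt (E₀ : ℂ)
  rcases hA.eventually_constant_or_nhds_le_map_nhds with hconst | hmap
  · -- eventually constant contradicts strictness
    exfalso
    rcases Metric.eventually_nhds_iff.mp hconst with ⟨δ, hδ, hδf⟩
    set x : ℝ := E₀ + min δ ε / 2 with hx
    have hmin : 0 < min δ ε := lt_min hδ hε
    have hxne : x ≠ E₀ := by
      simp only [hx]; intro h; nlinarith [add_right_cancel (a := E₀) (b := min δ ε / 2) (c := 0)]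
    have hd : |x - E₀| < min δ ε := by
      rw [hx]; rw [abs_of_pos (by linarith)]; ring_nf; linarith
    have hlt := hstrict x hxne (lt_of_lt_of_le hd (min_le_right _ _))
    have : f (x : ℂ) = f (E₀ : ℂ) := by
      apply hδf
      have : dist (x : ℂ) (E₀ : ℂ) = |x - E₀| := by
        rw [Complex.dist_eq, ← Complex.ofReal_sub, Complex.norm_real, Real.norm_eq_abs]
      rw [this]
      exact lt_of_lt_of_le hd (min_le_left _ _)
    rw [this] at hlt; exact lt_irrefl _ hlt
  · -- open mapping: f '' ball(E₀, ε) is a neighborhood of f(E₀)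
    have hball : Metric.ball ((E₀ : ℂ)) ε ∈ nhds ((E₀ : ℂ)) := Metric.ball_mem_nhds _ hε
    have himg : f '' Metric.ball ((E₀ : ℂ)) ε ∈ Filter.map f (nhds ((E₀ : ℂ))) := by
      rw [Filter.mem_map]
      exact Filter.mem_of_superset hball (Set.subset_preimage_image f _)
    have himg2 : f '' Metric.ball ((E₀ : ℂ)) ε ∈ nhds (f (E₀ : ℂ)) := hmap himg
    rcases Metric.mem_nhds_iff.mp himg2 with ⟨δ, hδ, hδsub⟩
    set c : ℝ := (f (E₀ : ℂ)).re with hc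
    set t : ℝ := min δ (1 - c) / 2 with ht
    have ht0 : 0 < t := by
      apply div_pos _ two_pos
      exact lt_min hδ (by linarith)
    have htδ : t < δ := by
      have := min_le_left δ (1 - c); simp only [ht]; linarith [hδ]
      -- fallback
    have ht1 : c + t < 1 := by
      have := min_le_right δ (1 - c); simp only [ht]; linarith
    -- the target value
    set w : ℂ := ((c + t : ℝ) : ℂ) with hw
    have hwmem : w ∈ Metric.ball (f (E₀ : ℂ)) δ := by
      rw [Metric.mem_ball, Complex.dist_eq]
      have hfc : f (E₀ : ℂ) = ((c : ℝ) : ℂ) := by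
        apply Complex.ext <;> simp [hc, hcre]
      rw [hfc, hw, ← Complex.ofReal_sub]
      rw [Complex.norm_real, Real.norm_eq_abs]
      rw [abs_of_pos (by linarith)]
      linarith
    rcases hδsub hwmem with ⟨E, hEball, hfE⟩
    refine ⟨E, ?_, ?_, ?_, ?_⟩
    · intro hEim
      have hEeq : E = ((E.re : ℝ) : ℂ) := by
        apply Complex.ext <;> simp [hEim]
      have hEne : E.re ≠ E₀ := by
        intro h
        rw [hEeq, h] at hfE
        have := congrArg Complex.re hfE
        simp only [hw, Complex.ofReal_re] at this
        linarith
      have hEd : |E.re - E₀| < ε := by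
        have h1 : dist E ((E₀ : ℂ)) < ε := Metric.mem_ball.mp hEball
        have h2 : |E.re - E₀| ≤ ‖E - (E₀ : ℂ)‖ := by
          have := Complex.abs_re_le_norm (E - (E₀ : ℂ))
          simpa using this
        rw [Complex.dist_eq] at h1
        linarith
      have := hstrict E.re hEne hEd
      rw [← hEeq, hfE] at this
      simp only [hw, Complex.ofReal_re] at this
      linarith
    · rw [hfE]; simp [hw]
    · rw [hfE]; simp only [hw, Complex.ofReal_re]; linarith
    · rw [hfE]; simp only [hw, Complex.ofReal_re]; linarith

/-- For an entire function f with the Schwarz symmetry f(conj z) = conj(f z),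
nonconstant of order less than 1, having a strict local extremum on ℝ at E₀
with −1 < f(E₀) < 1, there exist nonreal E with f(E) real and −1 < f(E) < 1. -/
theorem stmt_13 (f : ℂ → ℂ) (hf : Differentiable ℂ f)
    (hsym : ∀ z : ℂ, f (starRingEnd ℂ z) = starRingEnd ℂ (f z))
    (hnc : ¬∃ c : ℂ, ∀ z : ℂ, f z = c)
    (horder : ∃ ρ : ℝ, 0 ≤ ρ ∧ ρ < 1 ∧ ∃ C > (0 : ℝ),
      ∀ z : ℂ, ‖f z‖ ≤ C * Real.exp (‖z‖ ^ ρ))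
    (E₀ : ℝ)
    (hext : (∃ ε > (0 : ℝ), ∀ x : ℝ, x ≠ E₀ → |x - E₀| < ε →
              (f (x : ℂ)).re < (f (E₀ : ℂ)).re) ∨
            (∃ ε > (0 : ℝ), ∀ x : ℝ, x ≠ E₀ → |x - E₀| < ε →
              (f (E₀ : ℂ)).re < (f (x : ℂ)).re))
    (hlo : -1 < (f (E₀ : ℂ)).re) (hhi : (f (E₀ : ℂ)).re < 1) :
    ∃ E : ℂ, E.im ≠ 0 ∧ (f E).im = 0 ∧ -1 < (f E).re ∧ (f E).re < 1 := by
  rcases hext with ⟨ε, hε, hstrict⟩ | ⟨ε, hε, hstrict⟩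
  · exact stmt_13_aux f hf hsym E₀ ε hε hstrict hlo hhi
  · have := stmt_13_aux (fun z => -f z) (hf.neg)
      (fun z => by simp [hsym z]) E₀ ε hε
      (fun x hx hd => by simpa using neg_lt_neg (hstrict x hx hd))
      (by simp only [Complex.neg_re]; linarith) (by simp only [Complex.neg_re]; linarith)
    rcases this with ⟨E, h1, h2, h3, h4⟩
    refine ⟨E, h1, ?_, ?_, ?_⟩
    · simpa using h2
    · simp only [Complex.neg_im, Complex.neg_re] at h3 h4 ⊢; linarith
    · simp only [Complex.neg_re] at h3 h4 ⊢; linarith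
end

section
/- Let f be analytic on an open connected set U ⊆ ℂ, nonconstant, and let E₀ ∈ U with f(E₀) ∈ ℝ. Then in every punctured neighborhood of E₀ there exist points E ≠ E₀ with f(E) ∈ ℝ. -/
/-- The real level set of a nonconstant analytic function on an open connected
set has no isolated points: near any E₀ with f(E₀) real there are other points
where f is real. -/
theorem stmt_18 (U : Set ℂ) (hU : IsOpen U) (hUc : IsConnected U)
    (f : ℂ → ℂ) (hf : AnalyticOnNhd ℂ f U)
    (hnc : ¬∃ c : ℂ, ∀ z ∈ U, f z = c)
    (E₀ : ℂ) (hE₀ : E₀ ∈ U) (hreal : (f E₀).im = 0) :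
    ∀ ε > (0 : ℝ), ∃ E ∈ U, E ≠ E₀ ∧ ‖E - E₀‖ < ε ∧ (f E).im = 0 := by
  intro ε hε
  have hopen := (hf.is_constant_or_isOpen hUc.isPreconnected).resolve_left hnc
  set s : Set ℂ := U ∩ Metric.ball E₀ ε with hs
  have hsopen : IsOpen s := hU.inter Metric.isOpen_ball
  have hsub : s ⊆ U := Set.inter_subset_left
  have himg : IsOpen (f '' s) := hopen s hsub hsopen
  have hmem : f E₀ ∈ f '' s :=
    ⟨E₀, ⟨hE₀, Metric.mem_ball_self hε⟩, rfl⟩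
  obtain ⟨δ, hδ, hball⟩ := Metric.isOpen_iff.mp himg _ hmem
  have hw : f E₀ + (δ / 2 : ℝ) ∈ f '' s := by
    apply hball
    rw [Metric.mem_ball, Complex.dist_eq]
    simp only [add_sub_cancel_left, Complex.norm_real, Real.norm_eq_abs, abs_of_pos (half_pos hδ)]
    linarith
  obtain ⟨E, hEs, hfE⟩ := hw
  refine ⟨E, hEs.1, ?_, ?_, ?_⟩
  · intro h
    rw [h] at hfE
    have : ((δ / 2 : ℝ) : ℂ) = 0 := by
      have := hfE.symm
      rwa [add_eq_left] at this
    rw [Complex.ofReal_eq_zero] at this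
    linarith
  · simpa [Complex.dist_eq] using hEs.2
  · rw [hfE]
    simp [hreal]
end
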